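/- Let d, k ≥ 1 and let ν be a Borel probability measure on U(d). Then F_ν^{(k)} − F_{μ_H}^{(k)} = ‖ ∫ U^{⊗k} ⊗ conj(U)^{⊗k} dν(U) − ∫ U^{⊗k} ⊗ conj(U)^{⊗k} dμ_H(U) ‖_F², where ‖·‖_F is the Frobenius (Hilbert–Schmidt) norm. In particular F_ν^{(k)} ≥ F_{μ_H}^{(k)}. -/

import Mathlib

open MeasureTheory Matrix
open scoped Kronecker

/-- The `k`-fold tensor (Kronecker) power of a `d × d` matrix. -/
def tensorPow {d : ℕ} (k : ℕ) (U : Matrix (Fin d) (Fin d) ℂ) :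
    Matrix (Fin k → Fin d) (Fin k → Fin d) ℂ :=
  Matrix.of fun f g => ∏ j, U (f j) (g j)

/-- The entrywise (Bochner) integral of a matrix-valued function. -/
noncomputable def matInt {G : Type*} [MeasurableSpace G] (μ : Measure G)
    {m n : Type*} (f : G → Matrix m n ℂ) : Matrix m n ℂ :=
  Matrix.of fun i j => ∫ U, f U i j ∂μ

/-- The Borel σ-algebra on the unitary group `U(d)`. -/
noncomputable instance (d : ℕ) : MeasurableSpace (Matrix.unitaryGroup (Fin d) ℂ) :=
  borel _


/-- The `k`-th frame potential `F_ν^{(k)} = ∫∫ |Tr(U V†)|^{2k} dν(U) dν(V)`. -/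
noncomputable def framePotential (d k : ℕ) (ν : Measure (Matrix.unitaryGroup (Fin d) ℂ)) : ℝ :=
  ∫ U, ∫ V, ‖((U : Matrix (Fin d) (Fin d) ℂ) *
    (V : Matrix (Fin d) (Fin d) ℂ)ᴴ).trace‖ ^ (2 * k) ∂ν ∂ν

/-- The squared Frobenius (Hilbert–Schmidt) norm of a complex matrix. -/
noncomputable def frobNormSq {m n : Type*} [Fintype m] [Fintype n] (A : Matrix m n ℂ) : ℝ :=
  ∑ i, ∑ j, Complex.normSq (A i j)

/-- The vectorized `k`-th moment operator `∫ U^{⊗k} ⊗ conj(U)^{⊗k} dν(U)`. -/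
noncomputable def vecMomentOp (d k : ℕ) (ν : Measure (Matrix.unitaryGroup (Fin d) ℂ)) :
    Matrix ((Fin k → Fin d) × (Fin k → Fin d)) ((Fin k → Fin d) × (Fin k → Fin d)) ℂ :=
  matInt ν (fun U => tensorPow k (U : Matrix (Fin d) (Fin d) ℂ) ⊗ₖ
    tensorPow k ((U : Matrix (Fin d) (Fin d) ℂ).map (starRingEnd ℂ)))

namespace FrameAux

abbrev UG (d : ℕ) := Matrix.unitaryGroup (Fin d) ℂ

instance (d : ℕ) : BorelSpace (UG d) := ⟨rfl⟩

noncomputable def Md (d k : ℕ) (U : UG d) :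
    Matrix ((Fin k → Fin d) × (Fin k → Fin d)) ((Fin k → Fin d) × (Fin k → Fin d)) ℂ :=
  tensorPow k (U : Matrix (Fin d) (Fin d) ℂ) ⊗ₖ
    tensorPow k ((U : Matrix (Fin d) (Fin d) ℂ).map (starRingEnd ℂ))

variable {d k : ℕ}

lemma entry_bound (U : UG d) (i j : Fin d) : ‖(U : Matrix (Fin d) (Fin d) ℂ) i j‖ ≤ 1 := by
  have h0 : (U : Matrix (Fin d) (Fin d) ℂ)ᴴ * (U : Matrix (Fin d) (Fin d) ℂ) = 1 :=
    UnitaryGroup.star_mul_self U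
  have h : ((U : Matrix (Fin d) (Fin d) ℂ)ᴴ * U) j j = 1 := by
    rw [h0]; simp [Matrix.one_apply]
  rw [Matrix.mul_apply] at h
  have h2 : (∑ i', ((Complex.normSq ((U : Matrix (Fin d) (Fin d) ℂ) i' j) : ℝ) : ℂ)) = 1 := by
    rw [← h]
    refine Finset.sum_congr rfl fun i' _ => ?_
    rw [Matrix.conjTranspose_apply, Complex.star_def, mul_comm, Complex.mul_conj]
  have h3 : (∑ i', Complex.normSq ((U : Matrix (Fin d) (Fin d) ℂ) i' j)) = 1 := by
    have := congrArg Complex.re h2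
    simpa [Complex.re_sum] using this
  have h4 : Complex.normSq ((U : Matrix (Fin d) (Fin d) ℂ) i j) ≤ 1 := by
    rw [← h3]
    exact Finset.single_le_sum
      (f := fun i' => Complex.normSq ((U : Matrix (Fin d) (Fin d) ℂ) i' j))
      (fun i' _ => Complex.normSq_nonneg _) (Finset.mem_univ i)
  have h5 : ‖(U : Matrix (Fin d) (Fin d) ℂ) i j‖ ^ 2 ≤ 1 := by
    rw [Complex.sq_norm]; exact h4
  nlinarith [norm_nonneg ((U : Matrix (Fin d) (Fin d) ℂ) i j)]

lemma Md_bound (U : UG d) (a b : (Fin k → Fin d) × (Fin k → Fin d)) : ‖Md d k U a b‖ ≤ 1 := by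
  unfold Md tensorPow
  rw [Matrix.kroneckerMap_apply]
  simp only [Matrix.of_apply, Matrix.map_apply]
  rw [norm_mul, norm_prod, norm_prod]
  have h1 : ∀ (f g : Fin k → Fin d), (∏ j, ‖(U : Matrix (Fin d) (Fin d) ℂ) (f j) (g j)‖) ≤ 1 :=
    fun f g => Finset.prod_le_one (fun j _ => norm_nonneg _) (fun j _ => entry_bound U _ _)
  have h2 : (∏ j, ‖(starRingEnd ℂ) ((U : Matrix (Fin d) (Fin d) ℂ) (a.2 j) (b.2 j))‖) ≤ 1 := by
    refine Finset.prod_le_one (fun j _ => norm_nonneg _) (fun j _ => ?_)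
    rw [RCLike.norm_conj]; exact entry_bound U _ _
  have hn1 : (0:ℝ) ≤ ∏ j, ‖(U : Matrix (Fin d) (Fin d) ℂ) (a.1 j) (b.1 j)‖ :=
    Finset.prod_nonneg fun j _ => norm_nonneg _
  have hn2 : (0:ℝ) ≤ ∏ j, ‖(starRingEnd ℂ) ((U : Matrix (Fin d) (Fin d) ℂ) (a.2 j) (b.2 j))‖ :=
    Finset.prod_nonneg fun j _ => norm_nonneg _
  exact mul_le_one₀ (h1 a.1 b.1) hn2 h2

lemma Md_continuous (a b : (Fin k → Fin d) × (Fin k → Fin d)) :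
    Continuous fun U : UG d => Md d k U a b := by
  unfold Md tensorPow
  simp only [Matrix.kroneckerMap_apply, Matrix.of_apply, Matrix.map_apply]
  have hentry : ∀ (i j : Fin d), Continuous fun U : UG d =>
      (U : Matrix (Fin d) (Fin d) ℂ) i j := by
    intro i j
    have hcoe : Continuous fun U : UG d => (U : Matrix (Fin d) (Fin d) ℂ) :=
      continuous_subtype_val
    exact hcoe.matrix_elem i j
  refine Continuous.mul ?_ ?_
  · exact continuous_finset_prod
      (f := fun (j : Fin k) (U : UG d) => (U : Matrix (Fin d) (Fin d) ℂ) (a.1 j) (b.1 j))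
      Finset.univ fun j _ => hentry (a.1 j) (b.1 j)
  · exact continuous_finset_prod
      (f := fun (j : Fin k) (U : UG d) =>
        (starRingEnd ℂ) ((U : Matrix (Fin d) (Fin d) ℂ) (a.2 j) (b.2 j)))
      Finset.univ fun j _ => Complex.continuous_conj.comp (hentry (a.2 j) (b.2 j))

lemma Md_integrable (ρ : Measure (UG d)) [IsFiniteMeasure ρ]
    (a b : (Fin k → Fin d) × (Fin k → Fin d)) :
    Integrable (fun U => Md d k U a b) ρ :=
  (integrable_const (1:ℝ)).mono' (Md_continuous a b).aestronglyMeasurable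
    (Filter.Eventually.of_forall fun U => Md_bound U a b)

lemma tensor_inner (U V : Matrix (Fin d) (Fin d) ℂ) :
    ∑ f : Fin k → Fin d, ∑ g : Fin k → Fin d,
      tensorPow k U f g * (starRingEnd ℂ) (tensorPow k V f g) = ((U * Vᴴ).trace) ^ k := by
  have h1 : ∀ f : Fin k → Fin d,
      ∑ g : Fin k → Fin d, tensorPow k U f g * (starRingEnd ℂ) (tensorPow k V f g)
        = ∏ j, ((U * Vᴴ) (f j) (f j)) := by
    intro f
    have : ∀ g : Fin k → Fin d, tensorPow k U f g * (starRingEnd ℂ) (tensorPow k V f g)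
        = ∏ j, (U (f j) (g j) * (starRingEnd ℂ) (V (f j) (g j))) := by
      intro g
      simp only [tensorPow, Matrix.of_apply, map_prod, Finset.prod_mul_distrib]
    rw [Finset.sum_congr rfl fun g _ => this g]
    rw [← Fintype.prod_sum (fun (j : Fin k) (m : Fin d) =>
      U (f j) m * (starRingEnd ℂ) (V (f j) m))]
    refine Finset.prod_congr rfl fun j _ => ?_
    rw [Matrix.mul_apply]
    refine Finset.sum_congr rfl fun m _ => ?_
    rw [Matrix.conjTranspose_apply, Complex.star_def]
  rw [Finset.sum_congr rfl fun f _ => h1 f]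
  rw [Matrix.trace, Fintype.sum_pow (fun i => Matrix.diag (U * Vᴴ) i) k]
  rfl

lemma tensor_inner_conj (U V : Matrix (Fin d) (Fin d) ℂ) :
    ∑ f : Fin k → Fin d, ∑ g : Fin k → Fin d,
      tensorPow k (U.map (starRingEnd ℂ)) f g *
        (starRingEnd ℂ) (tensorPow k (V.map (starRingEnd ℂ)) f g)
      = (starRingEnd ℂ) (∑ f : Fin k → Fin d, ∑ g : Fin k → Fin d,
          tensorPow k U f g * (starRingEnd ℂ) (tensorPow k V f g)) := by
  rw [map_sum]
  refine Finset.sum_congr rfl fun f _ => ?_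
  rw [map_sum]
  refine Finset.sum_congr rfl fun g _ => ?_
  simp only [tensorPow, Matrix.of_apply, Matrix.map_apply, _root_.map_mul, map_prod,
    Complex.conj_conj]

lemma sum_Md (U V : UG d) :
    ∑ a : (Fin k → Fin d) × (Fin k → Fin d), ∑ b : (Fin k → Fin d) × (Fin k → Fin d),
      Md d k U a b * (starRingEnd ℂ) (Md d k V a b)
    = ((‖((U : Matrix (Fin d) (Fin d) ℂ) *
        (V : Matrix (Fin d) (Fin d) ℂ)ᴴ).trace‖ ^ (2 * k) : ℝ) : ℂ) := by
  set X : Matrix (Fin k → Fin d) (Fin k → Fin d) ℂ := tensorPow k (U : Matrix (Fin d) (Fin d) ℂ)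
  set X' : Matrix (Fin k → Fin d) (Fin k → Fin d) ℂ :=
    tensorPow k ((U : Matrix (Fin d) (Fin d) ℂ).map (starRingEnd ℂ))
  set Y : Matrix (Fin k → Fin d) (Fin k → Fin d) ℂ := tensorPow k (V : Matrix (Fin d) (Fin d) ℂ)
  set Y' : Matrix (Fin k → Fin d) (Fin k → Fin d) ℂ :=
    tensorPow k ((V : Matrix (Fin d) (Fin d) ℂ).map (starRingEnd ℂ))
  set s : ℂ := ∑ f : Fin k → Fin d, ∑ g : Fin k → Fin d, X f g * (starRingEnd ℂ) (Y f g) with hs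
  have hfactor : (∑ a : (Fin k → Fin d) × (Fin k → Fin d),
      ∑ b : (Fin k → Fin d) × (Fin k → Fin d), Md d k U a b * (starRingEnd ℂ) (Md d k V a b))
      = s * (starRingEnd ℂ) s := by
    have step1 : (∑ a : (Fin k → Fin d) × (Fin k → Fin d),
        ∑ b : (Fin k → Fin d) × (Fin k → Fin d), Md d k U a b * (starRingEnd ℂ) (Md d k V a b))
        = ∑ f : Fin k → Fin d, ∑ f' : Fin k → Fin d, ∑ g : Fin k → Fin d, ∑ g' : Fin k → Fin d,
            (X f g * (starRingEnd ℂ) (Y f g)) * (X' f' g' * (starRingEnd ℂ) (Y' f' g')) := by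
      rw [Fintype.sum_prod_type]
      refine Finset.sum_congr rfl fun f _ => ?_
      refine Finset.sum_congr rfl fun f' _ => ?_
      rw [Fintype.sum_prod_type]
      refine Finset.sum_congr rfl fun g _ => ?_
      refine Finset.sum_congr rfl fun g' _ => ?_
      simp only [Md, Matrix.kroneckerMap_apply, _root_.map_mul]
      ring
    rw [step1]
    have step2 : ∀ f f' : Fin k → Fin d,
        (∑ g : Fin k → Fin d, ∑ g' : Fin k → Fin d,
          (X f g * (starRingEnd ℂ) (Y f g)) * (X' f' g' * (starRingEnd ℂ) (Y' f' g')))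
        = (∑ g : Fin k → Fin d, X f g * (starRingEnd ℂ) (Y f g)) *
          (∑ g' : Fin k → Fin d, X' f' g' * (starRingEnd ℂ) (Y' f' g')) := by
      intro f f'
      rw [Finset.sum_mul_sum]
    calc (∑ f : Fin k → Fin d, ∑ f' : Fin k → Fin d, ∑ g : Fin k → Fin d, ∑ g' : Fin k → Fin d,
            (X f g * (starRingEnd ℂ) (Y f g)) * (X' f' g' * (starRingEnd ℂ) (Y' f' g')))
        = ∑ f : Fin k → Fin d, ∑ f' : Fin k → Fin d,
            (∑ g : Fin k → Fin d, X f g * (starRingEnd ℂ) (Y f g)) *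
            (∑ g' : Fin k → Fin d, X' f' g' * (starRingEnd ℂ) (Y' f' g')) := by
          exact Finset.sum_congr rfl fun f _ => Finset.sum_congr rfl fun f' _ => step2 f f'
      _ = s * ∑ f' : Fin k → Fin d, ∑ g' : Fin k → Fin d,
            X' f' g' * (starRingEnd ℂ) (Y' f' g') := by
          rw [← Finset.sum_mul_sum]
      _ = s * (starRingEnd ℂ) s := by
          rw [hs, tensor_inner_conj]
  rw [hfactor]
  have hst : s = (((U : Matrix (Fin d) (Fin d) ℂ) *
      (V : Matrix (Fin d) (Fin d) ℂ)ᴴ).trace) ^ k := tensor_inner _ _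
  rw [Complex.mul_conj, hst]
  norm_cast
  rw [← Complex.sq_norm, norm_pow, ← pow_mul, mul_comm k 2]

lemma integrable_of_norm_le_one (ρ : Measure (UG d)) [IsFiniteMeasure ρ] {f : UG d → ℂ}
    (hc : Continuous f) (hb : ∀ x, ‖f x‖ ≤ 1) : Integrable f ρ :=
  (integrable_const (1:ℝ)).mono' hc.aestronglyMeasurable (Filter.Eventually.of_forall hb)

lemma Md_mul_conj_integrable (σ : Measure (UG d)) [IsFiniteMeasure σ] {c : ℂ} (hc : ‖c‖ ≤ 1)
    (a b : (Fin k → Fin d) × (Fin k → Fin d)) :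
    Integrable (fun V : UG d => c * (starRingEnd ℂ) (Md d k V a b)) σ := by
  refine integrable_of_norm_le_one σ
    (continuous_const.mul (Complex.continuous_conj.comp (Md_continuous a b))) fun V => ?_
  rw [norm_mul]
  have h1 : ‖(starRingEnd ℂ) (Md d k V a b)‖ ≤ 1 := by
    rw [RCLike.norm_conj]; exact Md_bound V a b
  exact mul_le_one₀ hc (norm_nonneg _) h1

lemma vecMomentOp_apply (τ : Measure (UG d)) (a b : (Fin k → Fin d) × (Fin k → Fin d)) :
    vecMomentOp d k τ a b = ∫ U, Md d k U a b ∂τ := rfl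

lemma ip_eq (ρ σ : Measure (UG d)) [IsProbabilityMeasure ρ] [IsProbabilityMeasure σ] :
    ∑ a : (Fin k → Fin d) × (Fin k → Fin d), ∑ b : (Fin k → Fin d) × (Fin k → Fin d),
      vecMomentOp d k ρ a b * (starRingEnd ℂ) (vecMomentOp d k σ a b)
    = ((∫ U, ∫ V, ‖((U : Matrix (Fin d) (Fin d) ℂ) *
        (V : Matrix (Fin d) (Fin d) ℂ)ᴴ).trace‖ ^ (2 * k) ∂σ ∂ρ : ℝ) : ℂ) := by
  have inner_eq : ∀ U : UG d,
      ((∫ V, ‖((U : Matrix (Fin d) (Fin d) ℂ) *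
        (V : Matrix (Fin d) (Fin d) ℂ)ᴴ).trace‖ ^ (2 * k) ∂σ : ℝ) : ℂ)
      = ∑ a : (Fin k → Fin d) × (Fin k → Fin d), ∑ b : (Fin k → Fin d) × (Fin k → Fin d),
          Md d k U a b * (starRingEnd ℂ) (vecMomentOp d k σ a b) := by
    intro U
    refine Eq.trans (integral_ofReal (𝕜 := ℂ)).symm ?_
    refine Eq.trans (integral_congr_ae
      (Filter.Eventually.of_forall fun V => (sum_Md U V).symm)) ?_
    rw [integral_finset_sum _ (fun a _ => integrable_finset_sum _
      (fun b _ => Md_mul_conj_integrable σ (Md_bound U a b) a b))]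
    refine Finset.sum_congr rfl fun a _ => ?_
    rw [integral_finset_sum _ (fun b _ => Md_mul_conj_integrable σ (Md_bound U a b) a b)]
    refine Finset.sum_congr rfl fun b _ => ?_
    rw [integral_const_mul, integral_conj, vecMomentOp_apply]
  calc ∑ a : (Fin k → Fin d) × (Fin k → Fin d), ∑ b : (Fin k → Fin d) × (Fin k → Fin d),
        vecMomentOp d k ρ a b * (starRingEnd ℂ) (vecMomentOp d k σ a b)
      = ∑ a : (Fin k → Fin d) × (Fin k → Fin d), ∑ b : (Fin k → Fin d) × (Fin k → Fin d),
          ∫ U, Md d k U a b * (starRingEnd ℂ) (vecMomentOp d k σ a b) ∂ρ := by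
        refine Finset.sum_congr rfl fun a _ => Finset.sum_congr rfl fun b _ => ?_
        rw [vecMomentOp_apply, integral_mul_const]
    _ = ∫ U, (∑ a : (Fin k → Fin d) × (Fin k → Fin d),
          ∑ b : (Fin k → Fin d) × (Fin k → Fin d),
            Md d k U a b * (starRingEnd ℂ) (vecMomentOp d k σ a b)) ∂ρ := by
        have hint : ∀ (a b : (Fin k → Fin d) × (Fin k → Fin d)),
            Integrable (fun U : UG d =>
              Md d k U a b * (starRingEnd ℂ) (vecMomentOp d k σ a b)) ρ := by
          intro a b
          refine (integrable_of_norm_le_one ρ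
            ((Md_continuous a b).mul continuous_const) fun U => ?_)
          rw [norm_mul]
          have h1 : ‖(starRingEnd ℂ) (vecMomentOp d k σ a b)‖ ≤ 1 := by
            rw [RCLike.norm_conj, vecMomentOp_apply]
            calc ‖∫ V, Md d k V a b ∂σ‖ ≤ ∫ V, ‖Md d k V a b‖ ∂σ :=
                  norm_integral_le_integral_norm _
              _ ≤ ∫ _, (1:ℝ) ∂σ := by
                  refine integral_mono_of_nonneg
                    (Filter.Eventually.of_forall fun V => norm_nonneg _)
                    (integrable_const 1) (Filter.Eventually.of_forall fun V => Md_bound V a b)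
              _ = 1 := by simp
          exact mul_le_one₀ (Md_bound U a b) (norm_nonneg _) h1
        rw [integral_finset_sum _ (fun a _ => integrable_finset_sum _ (fun b _ => hint a b))]
        refine Finset.sum_congr rfl fun a _ => ?_
        rw [integral_finset_sum _ (fun b _ => hint a b)]
    _ = ∫ U, ((∫ V, ‖((U : Matrix (Fin d) (Fin d) ℂ) *
          (V : Matrix (Fin d) (Fin d) ℂ)ᴴ).trace‖ ^ (2 * k) ∂σ : ℝ) : ℂ) ∂ρ := by
        exact integral_congr_ae (Filter.Eventually.of_forall fun U => (inner_eq U).symm)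
    _ = ((∫ U, ∫ V, ‖((U : Matrix (Fin d) (Fin d) ℂ) *
          (V : Matrix (Fin d) (Fin d) ℂ)ᴴ).trace‖ ^ (2 * k) ∂σ ∂ρ : ℝ) : ℂ) := integral_ofReal

lemma inner_const (μ : Measure (UG d)) [IsProbabilityMeasure μ] [μ.IsMulLeftInvariant]
    (U : UG d) :
    ∫ V, ‖((U : Matrix (Fin d) (Fin d) ℂ) *
        (V : Matrix (Fin d) (Fin d) ℂ)ᴴ).trace‖ ^ (2 * k) ∂μ
    = ∫ V, ‖((V : Matrix (Fin d) (Fin d) ℂ))ᴴ.trace‖ ^ (2 * k) ∂μ := by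
  rw [← integral_mul_left_eq_self (μ := μ) (fun V : UG d =>
    ‖((U : Matrix (Fin d) (Fin d) ℂ) *
      (V : Matrix (Fin d) (Fin d) ℂ)ᴴ).trace‖ ^ (2 * k)) U]
  refine integral_congr_ae (Filter.Eventually.of_forall fun V => ?_)
  have hcoe : ((U * V : UG d) : Matrix (Fin d) (Fin d) ℂ)
      = (U : Matrix (Fin d) (Fin d) ℂ) * (V : Matrix (Fin d) (Fin d) ℂ) := Submonoid.coe_mul _ _ _
  have hstar : (U : Matrix (Fin d) (Fin d) ℂ)ᴴ * (U : Matrix (Fin d) (Fin d) ℂ) = 1 :=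
    UnitaryGroup.star_mul_self U
  have htr : ((U : Matrix (Fin d) (Fin d) ℂ) *
      ((U * V : UG d) : Matrix (Fin d) (Fin d) ℂ)ᴴ).trace
      = ((V : Matrix (Fin d) (Fin d) ℂ))ᴴ.trace := by
    rw [hcoe, Matrix.conjTranspose_mul, Matrix.trace_mul_comm, Matrix.mul_assoc, hstar,
      Matrix.mul_one]
  simp only [htr]

end FrameAux

open FrameAux in
theorem framePotential_sub_haar_eq_frobNormSq {d k : ℕ} (hd : 1 ≤ d) (hk : 1 ≤ k)
    (μ : Measure (Matrix.unitaryGroup (Fin d) ℂ)) [IsProbabilityMeasure μ]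
    [μ.IsMulLeftInvariant] [μ.IsMulRightInvariant]
    (ν : Measure (Matrix.unitaryGroup (Fin d) ℂ)) [IsProbabilityMeasure ν] :
    framePotential d k ν - framePotential d k μ =
      frobNormSq (vecMomentOp d k ν - vecMomentOp d k μ) ∧
    framePotential d k μ ≤ framePotential d k ν := by
  classical
  set c : ℝ := ∫ V : UG d, ‖((V : Matrix (Fin d) (Fin d) ℂ))ᴴ.trace‖ ^ (2 * k) ∂μ
    with hc
  have hdouble : ∀ (ρ : Measure (UG d)) [IsProbabilityMeasure ρ],
      (∫ U : UG d, ∫ V : UG d, ‖((U : Matrix (Fin d) (Fin d) ℂ) *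
        (V : Matrix (Fin d) (Fin d) ℂ)ᴴ).trace‖ ^ (2 * k) ∂μ ∂ρ) = c := by
    intro ρ _
    rw [integral_congr_ae (Filter.Eventually.of_forall fun U => inner_const μ U)]
    simp only [integral_const, measure_univ, probReal_univ, one_smul, hc]
  have hμc : framePotential d k μ = c := hdouble μ
  have hSAA : ∑ a : (Fin k → Fin d) × (Fin k → Fin d), ∑ b : (Fin k → Fin d) × (Fin k → Fin d),
      vecMomentOp d k ν a b * (starRingEnd ℂ) (vecMomentOp d k ν a b)
      = ((framePotential d k ν : ℝ) : ℂ) := ip_eq ν ν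
  have hSAB : ∑ a : (Fin k → Fin d) × (Fin k → Fin d), ∑ b : (Fin k → Fin d) × (Fin k → Fin d),
      vecMomentOp d k ν a b * (starRingEnd ℂ) (vecMomentOp d k μ a b) = ((c : ℝ) : ℂ) := by
    rw [ip_eq ν μ, hdouble ν]
  have hSBB : ∑ a : (Fin k → Fin d) × (Fin k → Fin d), ∑ b : (Fin k → Fin d) × (Fin k → Fin d),
      vecMomentOp d k μ a b * (starRingEnd ℂ) (vecMomentOp d k μ a b) = ((c : ℝ) : ℂ) := by
    rw [ip_eq μ μ, hdouble μ]
  have hSBA : ∑ a : (Fin k → Fin d) × (Fin k → Fin d), ∑ b : (Fin k → Fin d) × (Fin k → Fin d),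
      vecMomentOp d k μ a b * (starRingEnd ℂ) (vecMomentOp d k ν a b) = ((c : ℝ) : ℂ) := by
    have hconj : ∑ a : (Fin k → Fin d) × (Fin k → Fin d),
        ∑ b : (Fin k → Fin d) × (Fin k → Fin d),
        vecMomentOp d k μ a b * (starRingEnd ℂ) (vecMomentOp d k ν a b)
        = (starRingEnd ℂ) (∑ a : (Fin k → Fin d) × (Fin k → Fin d),
            ∑ b : (Fin k → Fin d) × (Fin k → Fin d),
            vecMomentOp d k ν a b * (starRingEnd ℂ) (vecMomentOp d k μ a b)) := by
      rw [map_sum]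
      refine Finset.sum_congr rfl fun a _ => ?_
      rw [map_sum]
      refine Finset.sum_congr rfl fun b _ => ?_
      rw [_root_.map_mul, Complex.conj_conj, mul_comm]
    rw [hconj, hSAB, Complex.conj_ofReal]
  have hfrob : frobNormSq (vecMomentOp d k ν - vecMomentOp d k μ)
      = framePotential d k ν - c := by
    have hre : frobNormSq (vecMomentOp d k ν - vecMomentOp d k μ)
        = (∑ a : (Fin k → Fin d) × (Fin k → Fin d), ∑ b : (Fin k → Fin d) × (Fin k → Fin d),
            (vecMomentOp d k ν - vecMomentOp d k μ) a b *
              (starRingEnd ℂ) ((vecMomentOp d k ν - vecMomentOp d k μ) a b)).re := by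
      unfold frobNormSq
      rw [Complex.re_sum]
      refine Finset.sum_congr rfl fun a _ => ?_
      rw [Complex.re_sum]
      refine Finset.sum_congr rfl fun b _ => ?_
      rw [Complex.mul_conj]
      simp
    rw [hre]
    have hexp : ∑ a : (Fin k → Fin d) × (Fin k → Fin d),
        ∑ b : (Fin k → Fin d) × (Fin k → Fin d),
        (vecMomentOp d k ν - vecMomentOp d k μ) a b *
          (starRingEnd ℂ) ((vecMomentOp d k ν - vecMomentOp d k μ) a b)
        = (∑ a : (Fin k → Fin d) × (Fin k → Fin d), ∑ b : (Fin k → Fin d) × (Fin k → Fin d),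
            vecMomentOp d k ν a b * (starRingEnd ℂ) (vecMomentOp d k ν a b))
          - (∑ a : (Fin k → Fin d) × (Fin k → Fin d), ∑ b : (Fin k → Fin d) × (Fin k → Fin d),
            vecMomentOp d k ν a b * (starRingEnd ℂ) (vecMomentOp d k μ a b))
          - (∑ a : (Fin k → Fin d) × (Fin k → Fin d), ∑ b : (Fin k → Fin d) × (Fin k → Fin d),
            vecMomentOp d k μ a b * (starRingEnd ℂ) (vecMomentOp d k ν a b))
          + (∑ a : (Fin k → Fin d) × (Fin k → Fin d), ∑ b : (Fin k → Fin d) × (Fin k → Fin d),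
            vecMomentOp d k μ a b * (starRingEnd ℂ) (vecMomentOp d k μ a b)) := by
      rw [← Finset.sum_sub_distrib, ← Finset.sum_sub_distrib, ← Finset.sum_add_distrib]
      refine Finset.sum_congr rfl fun a _ => ?_
      rw [← Finset.sum_sub_distrib, ← Finset.sum_sub_distrib, ← Finset.sum_add_distrib]
      refine Finset.sum_congr rfl fun b _ => ?_
      rw [Matrix.sub_apply, map_sub]
      ring
    rw [hexp, hSAA, hSAB, hSBA, hSBB]
    rw [← Complex.ofReal_sub, ← Complex.ofReal_sub, ← Complex.ofReal_add, Complex.ofReal_re]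
    ring
  have hnonneg : 0 ≤ frobNormSq (vecMomentOp d k ν - vecMomentOp d k μ) := by
    unfold frobNormSq
    exact Finset.sum_nonneg fun a _ => Finset.sum_nonneg fun b _ => Complex.normSq_nonneg _
  constructor
  · rw [hμc, hfrob]
  · rw [hμc]
    linarith [hfrob, hnonneg]
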